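/- Let ν be a class (iii) probability measure on [0,∞) with bounded continuous density f(x)=exp(−φ(x)) satisfying lim_{x→∞} φ(x)/log(x) = c with c>1, and let η be another probability measure with density g(x)=exp(−γ(x)). Suppose the limit lim_{x→∞} φ(x)/γ(x) exists and that g(x)/f(x) is bounded on every compact interval. Fix α>1. If lim_{x→∞} γ(x)/φ(x) > (α−1)/α + 1/(cα) then D^α(η|ν) < ∞, and if lim_{x→∞} γ(x)/φ(x) < (α−1)/α + 1/(cα) then D^α(η|ν) = ∞. -/

import Mathlib

open Filter MeasureTheory Set
open scoped ENNReal Topology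

noncomputable section

/-- The `F`-divergence `D_F(η|ν)` between a reference density `f` and an
alternative density `g` on `(0,∞)` (the value `⊤` encodes an infinite divergence). -/
def Ddiv (F f g : ℝ → ℝ) : ℝ≥0∞ :=
  ∫⁻ x in Set.Ioi (0 : ℝ), ENNReal.ofReal (F (g x / f x) * f x)

/-- Generator of the polynomial (α-) divergence: `F(y) = (y^α - 1)/(α(α-1))`. -/
def Falpha (α : ℝ) : ℝ → ℝ := fun y => (y ^ α - 1) / (α * (α - 1))

/-- Class (i): the log-density grows at least linearly, `lim φ(x)/x > c > 0`. -/
def IsClassI (φ : ℝ → ℝ) : Prop :=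
  ∃ c : ℝ, 0 < c ∧ ∀ᶠ x in atTop, c < φ x / x

/-- Data witnessing that a distribution with log-density `φ` (density `exp(-φ)`) is of
class (ii): heavier than exponential but lighter than any power law, together with the
auxiliary function `Φ` and the inverse `Ψ = Φ⁻¹` of its restriction to `[x̄, ∞)`. -/
structure ClassIIData (φ : ℝ → ℝ) : Type where
  xbar : ℝ
  Φ : ℝ → ℝ
  Ψ : ℝ → ℝ
  xbar_pos : 0 < xbar
  tendsto_div_id : Tendsto (fun x => φ x / x) atTop (nhds 0)
  tendsto_div_log : Tendsto (fun x => φ x / Real.log x) atTop atTop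
  pos : ∀ x ∈ Set.Ici xbar, 0 < Φ x
  strictConcave : StrictConcaveOn ℝ (Set.Ici xbar) Φ
  smooth : ContDiffOn ℝ 2 Φ (Set.Ici xbar)
  strictMono : StrictMonoOn Φ (Set.Ici xbar)
  inv_left : ∀ x ∈ Set.Ici xbar, Ψ (Φ x) = x
  inv_right : ∀ y ∈ Set.Ici (Φ xbar), Φ (Ψ y) = y
  liminf_pos : ∃ c : ℝ, 0 < c ∧ ∀ᶠ x in atTop, c ≤ Ψ (φ x) / x
  limsup_lt_top : ∃ C : ℝ, ∀ᶠ x in atTop, Ψ (φ x) / x ≤ C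

namespace ClassIIData

variable {φ : ℝ → ℝ}

/-- `ȳ = exp(Φ(x̄))`. -/
def ybar (d : ClassIIData φ) : ℝ := Real.exp (d.Φ d.xbar)

/-- The constant `a = (1+log ȳ)/(Φ⁻¹(log ȳ)^θ + θ Φ⁻¹(log ȳ)^{θ-1} (Φ⁻¹)'(log ȳ))`. -/
def aconst (d : ClassIIData φ) (θ : ℝ) : ℝ :=
  (1 + Real.log d.ybar) /
    (d.Ψ (Real.log d.ybar) ^ θ +
      θ * d.Ψ (Real.log d.ybar) ^ (θ - 1) * deriv d.Ψ (Real.log d.ybar))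

/-- The constant `b = ȳ log ȳ - a ȳ Φ⁻¹(log ȳ)^θ`. -/
def bconst (d : ClassIIData φ) (θ : ℝ) : ℝ :=
  d.ybar * Real.log d.ybar - d.aconst θ * d.ybar * d.Ψ (Real.log d.ybar) ^ θ

/-- The divergence generator `F_Φ`: `y log y` for `y ≤ ȳ` and
`a y Φ⁻¹(log y)^θ + b` for `y > ȳ`. -/
def FPhi (d : ClassIIData φ) (θ : ℝ) : ℝ → ℝ := fun y =>
  if y ≤ d.ybar then y * Real.log y
  else d.aconst θ * y * d.Ψ (Real.log y) ^ θ + d.bconst θ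

/-- `ψ(x) = a Φ⁻¹(x)^θ`. -/
def psiFun (d : ClassIIData φ) (θ : ℝ) : ℝ → ℝ := fun x => d.aconst θ * d.Ψ x ^ θ

/-- The integrand of `I(c) = ∫_c^∞ e^y (ψ(y)+ψ'(y))(ψ'(y)+ψ''(y)) f((F_Φ'(e^y)-α₁)/α₂) dy`. -/
def Iintegrand (d : ClassIIData φ) (θ α₁ α₂ : ℝ) (f : ℝ → ℝ) : ℝ → ℝ := fun y =>
  Real.exp y * (d.psiFun θ y + deriv (d.psiFun θ) y) *
    (deriv (d.psiFun θ) y + deriv (deriv (d.psiFun θ)) y) *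
    f ((deriv (d.FPhi θ) (Real.exp y) - α₁) / α₂)

end ClassIIData

/-- Convex conjugate over `s ≥ 0`: `F*(x) = sup_{s ≥ 0} (x s - F(s))`. -/
def Fstar (F : ℝ → ℝ) : ℝ → ℝ := fun x => sSup ((fun s => x * s - F s) '' Set.Ici (0 : ℝ))

/-- Pseudo-regular variation: `limsup_{c→1} limsup_{x→∞} h(cx)/h(x) = 1`,
spelled out in ε-form. -/
def PseudoRegularlyVarying (h : ℝ → ℝ) : Prop :=
  (∀ ε > (0:ℝ), ∀ᶠ c in nhds (1:ℝ), ∀ᶠ x in atTop, h (c * x) / h x ≤ 1 + ε) ∧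
  (∀ ε > (0:ℝ), ∃ᶠ c in nhds (1:ℝ), ∃ᶠ x in atTop, 1 - ε ≤ h (c * x) / h x)

/-- Proposition 3.3 (ii): α-divergence balls around class (iii) models. -/
private lemma lint_rpow_top {p T : ℝ} (hp : -1 ≤ p) (hT : 0 < T) :
    ∫⁻ x in Set.Ioi T, ENNReal.ofReal (x ^ p) = ⊤ := by
  by_contra h
  have hm : Measurable fun x : ℝ => x ^ p := by measurability
  have hint : IntegrableOn (fun x : ℝ => x ^ p) (Set.Ioi T) := by
    rw [IntegrableOn, ← lintegral_ofReal_ne_top_iff_integrable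
      (hm.aestronglyMeasurable.restrict)
      (ae_restrict_of_forall_mem measurableSet_Ioi fun x hx =>
        Real.rpow_nonneg (le_of_lt (hT.trans hx)) p)]
    exact h
  rw [integrableOn_Ioi_rpow_iff hT] at hint
  linarith


private lemma lint_rpow_div_top {p T D : ℝ} (hp : -1 ≤ p) (hT : 0 < T) (hD : 0 < D) :
    ∫⁻ x in Set.Ioi T, ENNReal.ofReal (x ^ p / D) = ⊤ := by
  have h1 : ∀ x : ℝ, ENNReal.ofReal (x ^ p / D) =
      ENNReal.ofReal D⁻¹ * ENNReal.ofReal (x ^ p) := by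
    intro x
    rw [div_eq_mul_inv, mul_comm, ← ENNReal.ofReal_mul (by positivity)]
  simp_rw [h1]
  rw [lintegral_const_mul _ (by measurability),
    lint_rpow_top hp hT,
    ENNReal.mul_top (ENNReal.ofReal_pos.mpr (by positivity)).ne']

set_option maxHeartbeats 1000000 in
theorem stmt3
    (φ γ f g : ℝ → ℝ) (α : ℝ) (hα : 1 < α) (c : ℝ) (hc : 1 < c)
    (hf : ∀ x ∈ Set.Ioi (0:ℝ), f x = Real.exp (-(φ x)))
    (hg : ∀ x ∈ Set.Ioi (0:ℝ), g x = Real.exp (-(γ x)))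
    (hfc : ContinuousOn f (Set.Ioi 0)) (hgc : ContinuousOn g (Set.Ioi 0))
    (hfint : ∫ x in Set.Ioi (0:ℝ), f x = 1)
    (hgint : ∫ x in Set.Ioi (0:ℝ), g x = 1)
    (hclassiii : Tendsto (fun x => φ x / Real.log x) atTop (nhds c))
    (hbdd : ∃ M : ℝ, ∀ x ∈ Set.Ioi (0:ℝ), f x ≤ M)
    (hratio : ∀ K : Set ℝ, IsCompact K → ∃ C : ℝ, ∀ x ∈ K ∩ Set.Ioi (0:ℝ), g x / f x ≤ C)
    (hlim : ∃ L : ℝ, Tendsto (fun x => φ x / γ x) atTop (nhds L)) :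
    ((∃ c' : ℝ, (α - 1) / α + 1 / (c * α) < c' ∧ ∀ᶠ x in atTop, c' ≤ γ x / φ x) →
        Ddiv (Falpha α) f g < ⊤) ∧
    ((∃ c' : ℝ, c' < (α - 1) / α + 1 / (c * α) ∧ ∀ᶠ x in atTop, γ x / φ x ≤ c') →
        Ddiv (Falpha α) f g = ⊤) := by
  have hα0 : (0:ℝ) < α := lt_trans one_pos hα
  have hα1 : (0:ℝ) < α - 1 := by linarith
  have hD : (0:ℝ) < α * (α - 1) := mul_pos hα0 hα1
  have hc0 : (0:ℝ) < c := lt_trans one_pos hc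
  have hform : ∀ x ∈ Set.Ioi (0:ℝ), Falpha α (g x / f x) * f x =
      (Real.exp ((α-1) * φ x - α * γ x) - Real.exp (-(φ x))) / (α * (α-1)) := by
    intro x hx
    rw [hf x hx, hg x hx, ← Real.exp_sub]
    simp only [Falpha]
    rw [← Real.exp_mul, div_mul_eq_mul_div, sub_mul, one_mul, ← Real.exp_add]
    rw [show (-γ x - -φ x) * α + -φ x = (α-1) * φ x - α * γ x from by ring]
  constructor
  · rintro ⟨c', hc', hev⟩
    have hkc : 1 < (α * c' - (α - 1)) * c := by
      have h1 : (c * α) * ((α - 1) / α + 1 / (c * α)) < (c * α) * c' :=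
        mul_lt_mul_of_pos_left hc' (mul_pos hc0 hα0)
      have h2 : (c * α) * ((α - 1) / α + 1 / (c * α)) = c * (α - 1) + 1 := by
        field_simp
      rw [h2] at h1
      nlinarith
    set k := α * c' - (α - 1) with hkdef
    have hk0 : 0 < k := by nlinarith
    have hinvk : 1/k < c := by rw [div_lt_iff₀ hk0]; nlinarith
    set q := (c + 1/k)/2 with hqdef
    have hq0 : 0 < q := by
      have : (0:ℝ) < 1/k := by positivity
      rw [hqdef]; linarith
    have hqc : q < c := by rw [hqdef]; linarith
    have hkk : k * (1/k) = 1 := mul_one_div_cancel hk0.ne'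
    have hpq : 1 < k * q := by
      have h5 : k * q = (k * c + k * (1/k))/2 := by rw [hqdef]; ring
      rw [hkk] at h5
      nlinarith
    have hev2 : ∀ᶠ x in atTop, q < φ x / Real.log x :=
      hclassiii.eventually (eventually_gt_nhds hqc)
    obtain ⟨T, hT⟩ := eventually_atTop.mp (hev2.and hev)
    set T' := max T 1 with hT'def
    have hT'0 : (0:ℝ) < T' := lt_of_lt_of_le one_pos (le_max_right _ _)
    have htail : ∀ x ∈ Set.Ioi T', ENNReal.ofReal (Falpha α (g x / f x) * f x) ≤
        ENNReal.ofReal (x ^ (-(k*q)) / (α * (α-1))) := by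
      intro x hx
      rw [Set.mem_Ioi] at hx
      have hxT : T ≤ x := le_of_lt (lt_of_le_of_lt (le_max_left T 1) hx)
      obtain ⟨h1, h2⟩ := hT x hxT
      have hx1 : (1:ℝ) < x := lt_of_le_of_lt (le_max_right T 1) hx
      have hx0 : (0:ℝ) < x := lt_trans one_pos hx1
      have hlog : 0 < Real.log x := Real.log_pos hx1
      have hφ : q * Real.log x < φ x := (lt_div_iff₀ hlog).mp h1
      have hφ0 : 0 < φ x := lt_trans (mul_pos hq0 hlog) hφ
      have hγ : c' * φ x ≤ γ x := (le_div_iff₀ hφ0).mp h2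
      apply ENNReal.ofReal_le_ofReal
      rw [hform x (Set.mem_Ioi.mpr hx0), Real.rpow_def_of_pos hx0]
      have hexp_le : (α-1) * φ x - α * γ x ≤ Real.log x * (-(k*q)) := by
        have h3 : α * (c' * φ x) ≤ α * γ x := mul_le_mul_of_nonneg_left hγ hα0.le
        have h4 : k * (q * Real.log x) ≤ k * φ x := mul_le_mul_of_nonneg_left hφ.le hk0.le
        have h6 : k * φ x = α * (c' * φ x) - (α-1) * φ x := by rw [hkdef]; ring
        nlinarith
      have h7 : Real.exp ((α-1) * φ x - α * γ x) ≤ Real.exp (Real.log x * (-(k*q))) :=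
        Real.exp_le_exp.mpr hexp_le
      have h8 : (0:ℝ) < Real.exp (-(φ x)) := Real.exp_pos _
      gcongr
      linarith
    obtain ⟨C, hC⟩ := hratio (Set.Icc 0 T') isCompact_Icc
    obtain ⟨M, hM⟩ := hbdd
    have hcomp : ∀ x ∈ Set.Ioc (0:ℝ) T', ENNReal.ofReal (Falpha α (g x / f x) * f x) ≤
        ENNReal.ofReal ((max C 0) ^ α / (α * (α-1)) * max M 0) := by
      intro x hx
      apply ENNReal.ofReal_le_ofReal
      have hx0 : (0:ℝ) < x := hx.1
      have hx0mem : x ∈ Set.Ioi (0:ℝ) := Set.mem_Ioi.mpr hx0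
      have hgf : g x / f x ≤ max C 0 :=
        le_trans (hC x ⟨⟨hx0.le, hx.2⟩, hx0mem⟩) (le_max_left _ _)
      have hgf0 : 0 ≤ g x / f x := by
        rw [hf x hx0mem, hg x hx0mem]; positivity
      have h1 : Falpha α (g x / f x) ≤ (max C 0) ^ α / (α * (α-1)) := by
        simp only [Falpha]
        have h2 : (g x / f x) ^ α ≤ (max C 0) ^ α := Real.rpow_le_rpow hgf0 hgf hα0.le
        have h3 : (0:ℝ) < 1 := one_pos
        gcongr
        linarith
      have hfM : f x ≤ max M 0 := le_trans (hM x hx0mem) (le_max_left _ _)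
      have hf0 : 0 ≤ f x := by rw [hf x hx0mem]; positivity
      exact mul_le_mul h1 hfM hf0 (by positivity)
    have hIoc : ∫⁻ x in Set.Ioc (0:ℝ) T', ENNReal.ofReal (Falpha α (g x / f x) * f x) < ⊤ := by
      calc ∫⁻ x in Set.Ioc (0:ℝ) T', ENNReal.ofReal (Falpha α (g x / f x) * f x)
          ≤ ∫⁻ _ in Set.Ioc (0:ℝ) T',
              ENNReal.ofReal ((max C 0) ^ α / (α * (α-1)) * max M 0) :=
            setLIntegral_mono_ae' measurableSet_Ioc (ae_of_all _ hcomp)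
        _ = ENNReal.ofReal ((max C 0) ^ α / (α * (α-1)) * max M 0) * volume (Set.Ioc (0:ℝ) T') :=
            setLIntegral_const _ _
        _ < ⊤ := ENNReal.mul_lt_top ENNReal.ofReal_lt_top measure_Ioc_lt_top
    have hIoi : ∫⁻ x in Set.Ioi T', ENNReal.ofReal (Falpha α (g x / f x) * f x) < ⊤ := by
      calc ∫⁻ x in Set.Ioi T', ENNReal.ofReal (Falpha α (g x / f x) * f x)
          ≤ ∫⁻ x in Set.Ioi T', ENNReal.ofReal (x ^ (-(k*q)) / (α * (α-1))) :=
            setLIntegral_mono_ae' measurableSet_Ioi (ae_of_all _ htail)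
        _ < ⊤ := IntegrableOn.setLIntegral_lt_top
            ((integrableOn_Ioi_rpow_of_lt (by linarith : -(k*q) < -1) hT'0).div_const _)
    have hsplit : Set.Ioi (0:ℝ) = Set.Ioc 0 T' ∪ Set.Ioi T' :=
      (Set.Ioc_union_Ioi_eq_Ioi hT'0.le).symm
    show (∫⁻ x in Set.Ioi (0:ℝ), ENNReal.ofReal (Falpha α (g x / f x) * f x)) < ⊤
    rw [hsplit]
    exact lt_of_le_of_lt (lintegral_union_le _ _ _) (ENNReal.add_lt_top.mpr ⟨hIoc, hIoi⟩)
  · rintro ⟨c₀, hc₀, hev0⟩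
    set c' := max c₀ ((α-1)/α + 1/(c*α*2)) with hc'def
    have hc'lt : c' < (α-1)/α + 1/(c*α) := by
      apply max_lt hc₀
      have : 1/(c*α*2) < 1/(c*α) := by
        apply one_div_lt_one_div_of_lt (mul_pos hc0 hα0)
        nlinarith
      linarith
    have hc'gt : (α-1)/α < c' := by
      have h1 : (0:ℝ) < 1/(c*α*2) := by positivity
      exact lt_of_lt_of_le (by linarith) (le_max_right _ _)
    have hev : ∀ᶠ x in atTop, γ x / φ x ≤ c' := hev0.mono fun x h => le_trans h (le_max_left _ _)
    set k := α * c' - (α - 1) with hkdef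
    have hk0 : 0 < k := by
      have h1 := mul_lt_mul_of_pos_right hc'gt hα0
      rw [div_mul_cancel₀ _ hα0.ne'] at h1
      rw [hkdef]; linarith
    have hkc : k * c < 1 := by
      have h1 : (c * α) * c' < (c * α) * ((α - 1) / α + 1 / (c * α)) :=
        mul_lt_mul_of_pos_left hc'lt (mul_pos hc0 hα0)
      have h2 : (c * α) * ((α - 1) / α + 1 / (c * α)) = c * (α - 1) + 1 := by
        field_simp
      rw [h2] at h1
      rw [hkdef]; nlinarith
    have hinvk : c < 1/k := by rw [lt_div_iff₀ hk0]; nlinarith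
    set q := (c + 1/k)/2 with hqdef
    have hqc : c < q := by rw [hqdef]; linarith
    have hq0 : 0 < q := lt_trans hc0 hqc
    have hkk : k * (1/k) = 1 := mul_one_div_cancel hk0.ne'
    have hp1 : k * q < 1 := by
      have h5 : k * q = (k * c + k * (1/k))/2 := by rw [hqdef]; ring
      rw [hkk] at h5
      nlinarith
    have hp0 : 0 < k * q := mul_pos hk0 hq0
    set r := (1 + c)/2 with hrdef
    have hr1 : 1 < r := by rw [hrdef]; linarith
    have hrc : r < c := by rw [hrdef]; linarith
    have hr0 : 0 < r := lt_trans one_pos hr1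
    have hev2 : ∀ᶠ x in atTop, φ x / Real.log x < q :=
      hclassiii.eventually (eventually_lt_nhds hqc)
    have hev3 : ∀ᶠ x in atTop, r < φ x / Real.log x :=
      hclassiii.eventually (eventually_gt_nhds hrc)
    obtain ⟨T, hT⟩ := eventually_atTop.mp ((hev2.and hev3).and hev)
    set T' := max T 1 with hT'def
    have hT'0 : (0:ℝ) < T' := lt_of_lt_of_le one_pos (le_max_right _ _)
    have hlow : ∀ x ∈ Set.Ioi T',
        ENNReal.ofReal (x ^ (-(k*q)) / (α * (α-1))) ≤
          ENNReal.ofReal (Falpha α (g x / f x) * f x) +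
            ENNReal.ofReal (x ^ (-r) / (α * (α-1))) := by
      intro x hx
      rw [Set.mem_Ioi] at hx
      have hxT : T ≤ x := le_of_lt (lt_of_le_of_lt (le_max_left T 1) hx)
      obtain ⟨⟨h1, h2⟩, h3⟩ := hT x hxT
      have hx1 : (1:ℝ) < x := lt_of_le_of_lt (le_max_right T 1) hx
      have hx0 : (0:ℝ) < x := lt_trans one_pos hx1
      have hx0mem : x ∈ Set.Ioi (0:ℝ) := Set.mem_Ioi.mpr hx0
      have hlog : 0 < Real.log x := Real.log_pos hx1
      have hφu : φ x < q * Real.log x := (div_lt_iff₀ hlog).mp h1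
      have hφl : r * Real.log x < φ x := (lt_div_iff₀ hlog).mp h2
      have hφ0 : 0 < φ x := lt_trans (mul_pos hr0 hlog) hφl
      have hγ : γ x ≤ c' * φ x := (div_le_iff₀ hφ0).mp h3
      have hA : Real.log x * (-(k*q)) ≤ (α-1) * φ x - α * γ x := by
        have h4 : α * γ x ≤ α * (c' * φ x) := mul_le_mul_of_nonneg_left hγ hα0.le
        have h5 : k * φ x ≤ k * (q * Real.log x) := mul_le_mul_of_nonneg_left hφu.le hk0.le
        have h6 : k * φ x = α * (c' * φ x) - (α-1) * φ x := by rw [hkdef]; ring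
        nlinarith
      have hB : Real.exp (-(φ x)) ≤ x ^ (-r) := by
        rw [Real.rpow_def_of_pos hx0]
        exact Real.exp_le_exp.mpr (by nlinarith)
      have hsum : x ^ (-(k*q)) / (α * (α-1)) ≤
          Falpha α (g x / f x) * f x + x ^ (-r) / (α * (α-1)) := by
        rw [hform x hx0mem, ← add_div]
        have h7 : x ^ (-(k*q)) ≤ Real.exp ((α-1) * φ x - α * γ x) := by
          rw [Real.rpow_def_of_pos hx0]
          exact Real.exp_le_exp.mpr hA
        gcongr
        linarith
      calc ENNReal.ofReal (x ^ (-(k*q)) / (α * (α-1)))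
          ≤ ENNReal.ofReal (Falpha α (g x / f x) * f x + x ^ (-r) / (α * (α-1))) :=
            ENNReal.ofReal_le_ofReal hsum
        _ ≤ _ := ENNReal.ofReal_add_le
    have hm2 : Measurable fun x : ℝ => ENNReal.ofReal (x ^ (-r) / (α * (α-1))) := by
      measurability
    have hfin : ∫⁻ x in Set.Ioi T', ENNReal.ofReal (x ^ (-r) / (α * (α-1))) < ⊤ :=
      IntegrableOn.setLIntegral_lt_top
        ((integrableOn_Ioi_rpow_of_lt (by linarith : -r < -1) hT'0).div_const _)
    have htop : ∫⁻ x in Set.Ioi T', ENNReal.ofReal (x ^ (-(k*q)) / (α * (α-1))) = ⊤ :=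
      lint_rpow_div_top (by linarith : (-1:ℝ) ≤ -(k*q)) hT'0 hD
    have hmain : ∫⁻ x in Set.Ioi T', ENNReal.ofReal (Falpha α (g x / f x) * f x) = ⊤ := by
      by_contra hne
      have hle : (⊤:ℝ≥0∞) ≤ ∫⁻ x in Set.Ioi T',
          (ENNReal.ofReal (Falpha α (g x / f x) * f x) +
            ENNReal.ofReal (x ^ (-r) / (α * (α-1)))) := by
        rw [← htop]
        exact setLIntegral_mono_ae' measurableSet_Ioi (ae_of_all _ hlow)
      rw [lintegral_add_right _ hm2] at hle
      exact absurd (top_le_iff.mp hle)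
        (ENNReal.add_lt_top.mpr ⟨lt_top_iff_ne_top.mpr hne, hfin⟩).ne
    have hmono : ∫⁻ x in Set.Ioi T', ENNReal.ofReal (Falpha α (g x / f x) * f x) ≤
        Ddiv (Falpha α) f g :=
      lintegral_mono_set (Set.Ioi_subset_Ioi hT'0.le)
    rw [hmain] at hmono
    exact top_le_iff.mp hmono
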